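/- If P(θ) = Tr(e^{iθZ} ρ e^{-iθZ} E) where Z = diag(3/2, 1/2, -1/2, -3/2), ρ is a 4×4 density matrix, and E is a 4×4 matrix with 0 ≤ E ≤ 1, then writing P(θ) = c_0 + Σ_{j=1}^{3}(c_j cos(jθ) + s_j sin(jθ)), we have c_2 + s_3 ≤ 1/√3. -/

import Mathlib

open Matrix Real Complex
open scoped ComplexOrder

/-- The diagonal entries `(3/2, 1/2, -1/2, -3/2)` of the spin-3/2 generator `Z`. -/
noncomputable def Zdiag : Fin 4 → ℝ := ![3 / 2, 1 / 2, -1 / 2, -3 / 2]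

theorem sqrt3_step (T S : ℝ) (hS0 : 0 ≤ S) (h3 : 3 * T^2 ≤ S^2) :
    T ≤ 1 / Real.sqrt 3 * S := by
  have hs3 : Real.sqrt 3 ^ 2 = 3 := Real.sq_sqrt (by norm_num)
  have hs3p : (0:ℝ) < Real.sqrt 3 := Real.sqrt_pos.2 (by norm_num)
  rw [div_mul_eq_mul_div, one_mul, le_div_iff₀ hs3p]
  rcases le_or_gt T 0 with hT0 | hT0
  · nlinarith [mul_nonpos_of_nonpos_of_nonneg hT0 hs3p.le]
  rcases hS0.eq_or_lt with hS | hS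
  · nlinarith
  have key : T * Real.sqrt 3 * S ≤ S * S := by
    have e1 : T^2 * (Real.sqrt 3)^2 = 3 * T^2 := by rw [hs3]; ring
    nlinarith [sq_nonneg (T * Real.sqrt 3 - S)]
  exact le_of_mul_le_mul_right key hS

theorem coreIneq (A B D p q u w : ℝ) (hA : 0 ≤ A) (hB : 0 ≤ B) (hD : 0 ≤ D)
    (hp : 0 ≤ p) (hq : 0 ≤ q) (hu : 0 ≤ u) (hw : 0 ≤ w)
    (h1 : A^2 + B^2 ≤ 1) (h2 : B^2 + D^2 ≤ 1) :
    A*p*u + B*p*w + D*q*w ≤ 1 / Real.sqrt 3 * (p^2+q^2+u^2+w^2) := by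
  apply sqrt3_step _ _ (by positivity)
  have hK : (4 - 3*A^2) * (4 - 3*B^2 - 3*D^2) - 9*A^2*B^2 ≥ 0 := by
    nlinarith [sq_nonneg (3*A^2 - 2), sq_nonneg A, sq_nonneg B]
  have h2' : (A*u + B*w)^2 + D^2*w^2 ≤ 4/3 * (u^2 + w^2) := by
    nlinarith [sq_nonneg ((4 - 3*A^2)*u - 3*A*B*w), mul_nonneg (mul_nonneg hw hw) hK,
      sq_nonneg A, sq_nonneg (A*u+B*w)]
  have h1' : (A*p*u + B*p*w + D*q*w)^2 ≤ (p^2 + q^2) * ((A*u + B*w)^2 + D^2*w^2) := by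
    nlinarith [sq_nonneg (p*D*w - q*(A*u + B*w))]
  nlinarith [sq_nonneg (p^2+q^2-u^2-w^2), h1',
    mul_le_mul_of_nonneg_left h2' (add_nonneg (sq_nonneg p) (sq_nonneg q))]

theorem pointwise (e20 e30 e31 x0 x1 x2 x3 : ℂ)
    (h1 : ‖e20‖ ^ 2 + ‖e30‖ ^ 2 ≤ 1/4)
    (h2 : ‖e30‖ ^ 2 + ‖e31‖ ^ 2 ≤ 1/4) :
    2*((starRingEnd ℂ) x0 * x2 * e20).re + 2*((starRingEnd ℂ) x1 * x3 * e31).re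
      - 2*((starRingEnd ℂ) x0 * x3 * e30).im
    ≤ 1 / Real.sqrt 3 *
      (‖x0‖ ^2 + ‖x1‖ ^2 + ‖x2‖ ^2 + ‖x3‖ ^2) := by
  have key := coreIneq (2*‖e20‖) (2*‖e30‖) (2*‖e31‖)
    (‖x0‖) (‖x1‖) (‖x2‖) (‖x3‖)
    (by positivity) (by positivity) (by positivity) (by positivity) (by positivity)
    (by positivity) (by positivity) (by nlinarith) (by nlinarith)
  have b1 : ((starRingEnd ℂ) x0 * x2 * e20).re ≤ ‖x0‖ * ‖x2‖ * ‖e20‖ := by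
    calc ((starRingEnd ℂ) x0 * x2 * e20).re ≤ ‖((starRingEnd ℂ) x0 * x2 * e20)‖ := Complex.re_le_norm _
      _ = ‖x0‖ * ‖x2‖ * ‖e20‖ := by
          simp [_root_.map_mul, Complex.norm_conj]
  have b2 : ((starRingEnd ℂ) x1 * x3 * e31).re ≤ ‖x1‖ * ‖x3‖ * ‖e31‖ := by
    calc ((starRingEnd ℂ) x1 * x3 * e31).re ≤ ‖((starRingEnd ℂ) x1 * x3 * e31)‖ := Complex.re_le_norm _
      _ = _ := by simp [_root_.map_mul, Complex.norm_conj]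
  have b3 : -((starRingEnd ℂ) x0 * x3 * e30).im ≤ ‖x0‖ * ‖x3‖ * ‖e30‖ := by
    calc -((starRingEnd ℂ) x0 * x3 * e30).im ≤ |((starRingEnd ℂ) x0 * x3 * e30).im| := neg_le_abs _
      _ ≤ ‖((starRingEnd ℂ) x0 * x3 * e30)‖ := Complex.abs_im_le_norm _
      _ = _ := by simp [_root_.map_mul, Complex.norm_conj]
  linarith [key]

theorem trigUnique (a0 a1 b1 a2 b2 a3 b3 : ℝ)
    (H : ∀ θ : ℝ, a0 + a1 * Real.cos θ + b1 * Real.sin θ + a2 * Real.cos (2*θ)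
      + b2 * Real.sin (2*θ) + a3 * Real.cos (3*θ) + b3 * Real.sin (3*θ) = 0) :
    a2 = 0 ∧ b3 = 0 := by
  have h0 := H 0
  have h1 := H π
  have h2 := H (π/2)
  have h3 := H (-(π/2))
  have h4 := H (π/6)
  have h5 := H (5*π/6)
  norm_num at h0
  rw [show (2:ℝ)*π = π + π by ring, show (3:ℝ)*π = π + (π + π) by ring] at h1
  simp [Real.cos_add, Real.sin_add] at h1
  rw [show (2:ℝ)*(π/2) = π by ring, show (3:ℝ)*(π/2) = π + π/2 by ring] at h2
  simp [Real.cos_add, Real.sin_add] at h2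
  rw [show (2:ℝ)*(-(π/2)) = -π by ring, show (3:ℝ)*(-(π/2)) = -(π + π/2) by ring] at h3
  simp [Real.cos_add, Real.sin_add] at h3
  rw [show (2:ℝ)*(π/6) = π/3 by ring, show (3:ℝ)*(π/6) = π/2 by ring] at h4
  simp [Real.cos_pi_div_six, Real.sin_pi_div_six, Real.cos_pi_div_three, Real.sin_pi_div_three] at h4
  rw [show (5:ℝ)*π/6 = π - π/6 by ring, show (2:ℝ)*(π - π/6) = π + (π - π/3) by ring,
      show (3:ℝ)*(π - π/6) = π + (π + π/2) by ring] at h5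
  simp [Real.cos_add, Real.sin_add, Real.cos_sub, Real.sin_sub, Real.cos_pi_div_six,
    Real.sin_pi_div_six, Real.cos_pi_div_three, Real.sin_pi_div_three, Real.cos_pi_sub, Real.sin_pi_sub] at h5
  constructor <;> linarith

theorem rowBound (E : Matrix (Fin 4) (Fin 4) ℂ)
    (hE : E.PosSemidef) (hE1 : ((1 : Matrix (Fin 4) (Fin 4) ℂ) - E).PosSemidef) :
    ‖(E 0 2)‖ ^ 2 + ‖(E 0 3)‖ ^ 2 ≤ 1/4 := by
  set x := E 0 2 with hx
  set y := E 0 3 with hy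
  have h20 : E 2 0 = starRingEnd ℂ x := by
    rw [hx]; conv_lhs => rw [← hE.1]
    simp [Matrix.conjTranspose_apply, Complex.star_def]
  have h30 : E 3 0 = starRingEnd ℂ y := by
    rw [hy]; conv_lhs => rw [← hE.1]
    simp [Matrix.conjTranspose_apply, Complex.star_def]
  set φm : Fin 4 → ℂ := ![1/2, 0, -(starRingEnd ℂ x), -(starRingEnd ℂ y)] with hφm
  set φp : Fin 4 → ℂ := ![1/2, 0, starRingEnd ℂ x, starRingEnd ℂ y] with hφp
  have hm := hE.dotProduct_mulVec_nonneg φm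
  have hp := hE1.dotProduct_mulVec_nonneg φp
  have key : star φm ⬝ᵥ (E *ᵥ φm) + star φp ⬝ᵥ (((1 : Matrix (Fin 4) (Fin 4) ℂ) - E) *ᵥ φp)
      = 1/4 - ((Complex.normSq x + Complex.normSq y : ℝ) : ℂ) := by
    have e1 : (Complex.normSq x : ℂ) = starRingEnd ℂ x * x := Complex.normSq_eq_conj_mul_self
    have e2 : (Complex.normSq y : ℂ) = starRingEnd ℂ y * y := Complex.normSq_eq_conj_mul_self
    simp only [hφm, hφp, Matrix.sub_mulVec, Matrix.one_mulVec, dotProduct,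
      Matrix.mulVec, Fin.sum_univ_four, Pi.star_apply, Pi.sub_apply,
      Matrix.cons_val_zero, Matrix.cons_val_one, Matrix.head_cons,
      Matrix.cons_val_two, Matrix.tail_cons, Matrix.cons_val_three, h20, h30]
    push_cast [e1, e2]
    ring_nf
    simp [Complex.star_def]
    rw [h20, h30]
    ring
  have hsum : (0:ℂ) ≤ 1/4 - ((Complex.normSq x + Complex.normSq y : ℝ) : ℂ) := by
    rw [← key]; exact add_nonneg hm hp
  rw [Complex.le_def] at hsum
  have hre := hsum.1
  simp [Complex.sub_re, Complex.ofReal_re] at hre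
  rw [Complex.sq_norm, Complex.sq_norm]
  linarith

theorem rowBound2 (E : Matrix (Fin 4) (Fin 4) ℂ)
    (hE : E.PosSemidef) (hE1 : ((1 : Matrix (Fin 4) (Fin 4) ℂ) - E).PosSemidef) :
    ‖(E 3 0)‖ ^ 2 + ‖(E 3 1)‖ ^ 2 ≤ 1/4 := by
  set x := E 3 0 with hx
  set y := E 3 1 with hy
  have h03 : E 0 3 = starRingEnd ℂ x := by
    rw [hx]; conv_lhs => rw [← hE.1]
    simp [Matrix.conjTranspose_apply, Complex.star_def]
  have h13 : E 1 3 = starRingEnd ℂ y := by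
    rw [hy]; conv_lhs => rw [← hE.1]
    simp [Matrix.conjTranspose_apply, Complex.star_def]
  set φm : Fin 4 → ℂ := ![-(starRingEnd ℂ x), -(starRingEnd ℂ y), 0, 1/2] with hφm
  set φp : Fin 4 → ℂ := ![starRingEnd ℂ x, starRingEnd ℂ y, 0, 1/2] with hφp
  have hm := hE.dotProduct_mulVec_nonneg φm
  have hp := hE1.dotProduct_mulVec_nonneg φp
  have key : star φm ⬝ᵥ (E *ᵥ φm) + star φp ⬝ᵥ (((1 : Matrix (Fin 4) (Fin 4) ℂ) - E) *ᵥ φp)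
      = 1/4 - ((Complex.normSq x + Complex.normSq y : ℝ) : ℂ) := by
    have e1 : (Complex.normSq x : ℂ) = starRingEnd ℂ x * x := Complex.normSq_eq_conj_mul_self
    have e2 : (Complex.normSq y : ℂ) = starRingEnd ℂ y * y := Complex.normSq_eq_conj_mul_self
    simp only [hφm, hφp, Matrix.sub_mulVec, Matrix.one_mulVec, dotProduct,
      Matrix.mulVec, Fin.sum_univ_four, Pi.star_apply, Pi.sub_apply,
      Matrix.cons_val_zero, Matrix.cons_val_one, Matrix.head_cons,
      Matrix.cons_val_two, Matrix.tail_cons, Matrix.cons_val_three, h03, h13]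
    push_cast [e1, e2]
    ring_nf
    simp [Complex.star_def]
    rw [h03, h13]
    ring
  have hsum : (0:ℂ) ≤ 1/4 - ((Complex.normSq x + Complex.normSq y : ℝ) : ℂ) := by
    rw [← key]; exact add_nonneg hm hp
  rw [Complex.le_def] at hsum
  have hre := hsum.1
  simp [Complex.sub_re, Complex.ofReal_re] at hre
  rw [Complex.sq_norm, Complex.sq_norm]
  linarith

theorem traceExpand (ρ E : Matrix (Fin 4) (Fin 4) ℂ) (θ : ℝ) :
    ((Matrix.diagonal (fun j => Complex.exp (Complex.I * (Zdiag j : ℂ) * (θ : ℂ))) * ρ *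
          Matrix.diagonal (fun j => Complex.exp (-(Complex.I * (Zdiag j : ℂ) * (θ : ℂ)))) *
          E).trace).re
    = (ρ 0 0 * E 0 0 + ρ 1 1 * E 1 1 + ρ 2 2 * E 2 2 + ρ 3 3 * E 3 3).re
      + (ρ 0 1 * E 1 0 + ρ 1 2 * E 2 1 + ρ 2 3 * E 3 2
          + ρ 1 0 * E 0 1 + ρ 2 1 * E 1 2 + ρ 3 2 * E 2 3).re * Real.cos θ
      + ((ρ 1 0 * E 0 1 + ρ 2 1 * E 1 2 + ρ 3 2 * E 2 3)
          - (ρ 0 1 * E 1 0 + ρ 1 2 * E 2 1 + ρ 2 3 * E 3 2)).im * Real.sin θ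
      + (ρ 0 2 * E 2 0 + ρ 1 3 * E 3 1 + ρ 2 0 * E 0 2 + ρ 3 1 * E 1 3).re * Real.cos (2*θ)
      + ((ρ 2 0 * E 0 2 + ρ 3 1 * E 1 3) - (ρ 0 2 * E 2 0 + ρ 1 3 * E 3 1)).im * Real.sin (2*θ)
      + (ρ 0 3 * E 3 0 + ρ 3 0 * E 0 3).re * Real.cos (3*θ)
      + (ρ 3 0 * E 0 3 - ρ 0 3 * E 3 0).im * Real.sin (3*θ) := by
  have hPP' : cexp (Complex.I * (3/2) * (θ:ℂ)) * cexp (-(Complex.I * (3/2) * (θ:ℂ))) = 1 := by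
    rw [← Complex.exp_add]; norm_num
  have hQQ' : cexp (Complex.I * (1/2) * (θ:ℂ)) * cexp (-(Complex.I * (1/2) * (θ:ℂ))) = 1 := by
    rw [← Complex.exp_add]; norm_num
  have hPQ' : cexp (Complex.I * (3/2) * (θ:ℂ)) * cexp (-(Complex.I * (1/2) * (θ:ℂ)))
      = cexp ((θ:ℂ) * Complex.I) := by
    rw [← Complex.exp_add]; congr 1; push_cast; ring
  have hQQ : cexp (Complex.I * (1/2) * (θ:ℂ)) * cexp (Complex.I * (1/2) * (θ:ℂ))
      = cexp ((θ:ℂ) * Complex.I) := by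
    rw [← Complex.exp_add]; congr 1; push_cast; ring
  have hPQ : cexp (Complex.I * (3/2) * (θ:ℂ)) * cexp (Complex.I * (1/2) * (θ:ℂ))
      = cexp (2 * (θ:ℂ) * Complex.I) := by
    rw [← Complex.exp_add]; congr 1; push_cast; ring
  have hPP : cexp (Complex.I * (3/2) * (θ:ℂ)) * cexp (Complex.I * (3/2) * (θ:ℂ))
      = cexp (3 * (θ:ℂ) * Complex.I) := by
    rw [← Complex.exp_add]; congr 1; push_cast; ring
  have hQP' : cexp (Complex.I * (1/2) * (θ:ℂ)) * cexp (-(Complex.I * (3/2) * (θ:ℂ)))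
      = cexp (-((θ:ℂ) * Complex.I)) := by
    rw [← Complex.exp_add]; congr 1; push_cast; ring
  have hQ'Q' : cexp (-(Complex.I * (1/2) * (θ:ℂ))) * cexp (-(Complex.I * (1/2) * (θ:ℂ)))
      = cexp (-((θ:ℂ) * Complex.I)) := by
    rw [← Complex.exp_add]; congr 1; push_cast; ring
  have hQ'P' : cexp (-(Complex.I * (1/2) * (θ:ℂ))) * cexp (-(Complex.I * (3/2) * (θ:ℂ)))
      = cexp (-(2 * (θ:ℂ) * Complex.I)) := by
    rw [← Complex.exp_add]; congr 1; push_cast; ring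
  have hP'P' : cexp (-(Complex.I * (3/2) * (θ:ℂ))) * cexp (-(Complex.I * (3/2) * (θ:ℂ)))
      = cexp (-(3 * (θ:ℂ) * Complex.I)) := by
    rw [← Complex.exp_add]; congr 1; push_cast; ring
  have hQ'Q : cexp (-(Complex.I * (1/2) * (θ:ℂ))) * cexp (Complex.I * (1/2) * (θ:ℂ)) = 1 := by
    rw [← Complex.exp_add]; norm_num
  have hQ'P : cexp (-(Complex.I * (1/2) * (θ:ℂ))) * cexp (Complex.I * (3/2) * (θ:ℂ))
      = cexp ((θ:ℂ) * Complex.I) := by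
    rw [← Complex.exp_add]; congr 1; push_cast; ring
  have hP'Q : cexp (-(Complex.I * (3/2) * (θ:ℂ))) * cexp (Complex.I * (1/2) * (θ:ℂ))
      = cexp (-((θ:ℂ) * Complex.I)) := by
    rw [← Complex.exp_add]; congr 1; push_cast; ring
  have hP'P : cexp (-(Complex.I * (3/2) * (θ:ℂ))) * cexp (Complex.I * (3/2) * (θ:ℂ)) = 1 := by
    rw [← Complex.exp_add]; norm_num
  have hP'Q' : cexp (-(Complex.I * (3/2) * (θ:ℂ))) * cexp (-(Complex.I * (1/2) * (θ:ℂ)))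
      = cexp (-(2 * (θ:ℂ) * Complex.I)) := by
    rw [← Complex.exp_add]; congr 1; push_cast; ring
  have hTr : ((Matrix.diagonal (fun j => Complex.exp (Complex.I * (Zdiag j : ℂ) * (θ : ℂ))) * ρ *
          Matrix.diagonal (fun j => Complex.exp (-(Complex.I * (Zdiag j : ℂ) * (θ : ℂ)))) *
          E).trace)
      = (ρ 0 0 * E 0 0 + ρ 1 1 * E 1 1 + ρ 2 2 * E 2 2 + ρ 3 3 * E 3 3)
        + (ρ 0 1 * E 1 0 + ρ 1 2 * E 2 1 + ρ 2 3 * E 3 2) * cexp ((θ:ℂ) * Complex.I)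
        + (ρ 1 0 * E 0 1 + ρ 2 1 * E 1 2 + ρ 3 2 * E 2 3) * cexp (-((θ:ℂ) * Complex.I))
        + (ρ 0 2 * E 2 0 + ρ 1 3 * E 3 1) * cexp (2 * (θ:ℂ) * Complex.I)
        + (ρ 2 0 * E 0 2 + ρ 3 1 * E 1 3) * cexp (-(2 * (θ:ℂ) * Complex.I))
        + (ρ 0 3 * E 3 0) * cexp (3 * (θ:ℂ) * Complex.I)
        + (ρ 3 0 * E 0 3) * cexp (-(3 * (θ:ℂ) * Complex.I)) := by
    rw [Matrix.trace]
    simp only [Matrix.diag, Matrix.mul_apply, Matrix.mul_diagonal, Matrix.diagonal_mul,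
      Fin.sum_univ_four, Zdiag]
    simp (config := { decide := true }) only [Matrix.diagonal_apply]
    simp only [Matrix.cons_val_two, Matrix.cons_val_three, Matrix.tail_cons, Matrix.head_cons]
    norm_num
    linear_combination (ρ 0 0 * E 0 0) * hPP' + (ρ 0 1 * E 1 0) * hPQ'
      + (ρ 0 2 * E 2 0) * hPQ + (ρ 0 3 * E 3 0) * hPP
      + (ρ 1 0 * E 0 1) * hQP' + (ρ 1 1 * E 1 1) * hQQ'
      + (ρ 1 2 * E 2 1) * hQQ + (ρ 1 3 * E 3 1) * hPQ
      + (ρ 2 0 * E 0 2) * hQ'P' + (ρ 2 1 * E 1 2) * hQ'Q'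
      + (ρ 2 2 * E 2 2) * hQ'Q + (ρ 2 3 * E 3 2) * hQ'P
      + (ρ 3 0 * E 0 3) * hP'P' + (ρ 3 1 * E 1 3) * hP'Q'
      + (ρ 3 2 * E 2 3) * hP'Q + (ρ 3 3 * E 3 3) * hP'P
  have neglem : ∀ x : ℝ, -((x:ℂ) * Complex.I) = ((-x:ℝ):ℂ) * Complex.I := by
    intro x; push_cast; ring
  rw [hTr]
  simp only [show (2*(θ:ℂ)) = (((2*θ:ℝ)):ℂ) by push_cast; ring,
    show (3*(θ:ℂ)) = (((3*θ:ℝ)):ℂ) by push_cast; ring, neglem]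
  simp only [Complex.add_re, Complex.sub_re, Complex.add_im, Complex.sub_im, Complex.mul_re,
    Complex.exp_ofReal_mul_I_re, Complex.exp_ofReal_mul_I_im, Real.cos_neg, Real.sin_neg,
    Complex.one_re, Complex.one_im]
  ring

/-- Tsirelson-type inequality for spin 3/2: if
`P(θ) = Tr(e^{iθZ} ρ e^{-iθZ} E)` with `Z = diag(3/2, 1/2, -1/2, -3/2)`, `ρ` a density
matrix and `0 ≤ E ≤ 1`, and `P(θ) = c₀ + Σ_{j=1}^3 (c_j cos(jθ) + s_j sin(jθ))`,
then `c₂ + s₃ ≤ 1/√3`. -/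
theorem stmt16 (ρ E : Matrix (Fin 4) (Fin 4) ℂ)
    (hρ : ρ.PosSemidef) (hTr : ρ.trace = 1)
    (hE : E.PosSemidef) (hE1 : ((1 : Matrix (Fin 4) (Fin 4) ℂ) - E).PosSemidef)
    (c₀ c₁ c₂ c₃ s₁ s₂ s₃ : ℝ)
    (hP : ∀ θ : ℝ,
      ((Matrix.diagonal (fun j => Complex.exp (Complex.I * (Zdiag j : ℂ) * (θ : ℂ))) * ρ *
          Matrix.diagonal (fun j => Complex.exp (-(Complex.I * (Zdiag j : ℂ) * (θ : ℂ)))) *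
          E).trace).re
        = c₀ + c₁ * Real.cos θ + s₁ * Real.sin θ + c₂ * Real.cos (2 * θ)
          + s₂ * Real.sin (2 * θ) + c₃ * Real.cos (3 * θ) + s₃ * Real.sin (3 * θ)) :
    c₂ + s₃ ≤ 1 / Real.sqrt 3 := by
  have hEH := hE.1
  have hρH := hρ.1
  have H : ∀ θ : ℝ,
      (c₀ - (ρ 0 0 * E 0 0 + ρ 1 1 * E 1 1 + ρ 2 2 * E 2 2 + ρ 3 3 * E 3 3).re)
      + (c₁ - (ρ 0 1 * E 1 0 + ρ 1 2 * E 2 1 + ρ 2 3 * E 3 2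
          + ρ 1 0 * E 0 1 + ρ 2 1 * E 1 2 + ρ 3 2 * E 2 3).re) * Real.cos θ
      + (s₁ - ((ρ 1 0 * E 0 1 + ρ 2 1 * E 1 2 + ρ 3 2 * E 2 3)
          - (ρ 0 1 * E 1 0 + ρ 1 2 * E 2 1 + ρ 2 3 * E 3 2)).im) * Real.sin θ
      + (c₂ - (ρ 0 2 * E 2 0 + ρ 1 3 * E 3 1 + ρ 2 0 * E 0 2 + ρ 3 1 * E 1 3).re) * Real.cos (2*θ)
      + (s₂ - ((ρ 2 0 * E 0 2 + ρ 3 1 * E 1 3) - (ρ 0 2 * E 2 0 + ρ 1 3 * E 3 1)).im) * Real.sin (2*θ)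
      + (c₃ - (ρ 0 3 * E 3 0 + ρ 3 0 * E 0 3).re) * Real.cos (3*θ)
      + (s₃ - (ρ 3 0 * E 0 3 - ρ 0 3 * E 3 0).im) * Real.sin (3*θ) = 0 := by
    intro θ
    linear_combination (traceExpand ρ E θ) - (hP θ)
  obtain ⟨ha2, hb3⟩ := trigUnique _ _ _ _ _ _ _ H
  rw [sub_eq_zero] at ha2 hb3
  have hc2 : c₂ = 2*(ρ 0 2 * E 2 0).re + 2*(ρ 1 3 * E 3 1).re := by
    rw [ha2, ← hρH.apply 2 0, ← hρH.apply 3 1, ← hEH.apply 0 2, ← hEH.apply 1 3]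
    simp only [Complex.add_re, Complex.mul_re, Complex.star_def, Complex.conj_re,
      Complex.conj_im]
    ring
  have hs3 : s₃ = -(2*(ρ 0 3 * E 3 0).im) := by
    rw [hb3, ← hρH.apply 3 0, ← hEH.apply 0 3]
    simp only [Complex.sub_im, Complex.mul_im, Complex.star_def, Complex.conj_re,
      Complex.conj_im]
    ring
  obtain ⟨A, hAe⟩ : ∃ A : Matrix (Fin 4) (Fin 4) ℂ, ρ = star A * A := by
    open scoped MatrixOrder Matrix.Norms.L2Operator in
    exact CStarAlgebra.nonneg_iff_eq_star_mul_self.mp hρ.nonneg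
  have hent : ∀ j l, ρ j l = (starRingEnd ℂ) (A 0 j) * A 0 l + (starRingEnd ℂ) (A 1 j) * A 1 l
      + (starRingEnd ℂ) (A 2 j) * A 2 l + (starRingEnd ℂ) (A 3 j) * A 3 l := by
    intro j l
    rw [hAe]
    simp [Matrix.mul_apply, Matrix.conjTranspose_apply, Fin.sum_univ_four, Complex.star_def]
  have habs : ‖(E 2 0)‖ ^ 2 + ‖(E 3 0)‖ ^ 2 ≤ 1/4 := by
    have h := rowBound E hE hE1
    rw [← hEH.apply 0 2, ← hEH.apply 0 3] at h
    simpa using h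
  have habs2 : ‖(E 3 0)‖ ^ 2 + ‖(E 3 1)‖ ^ 2 ≤ 1/4 := rowBound2 E hE hE1
  have key : ∀ k : Fin 4,
      2*((starRingEnd ℂ) (A k 0) * A k 2 * E 2 0).re
        + 2*((starRingEnd ℂ) (A k 1) * A k 3 * E 3 1).re
        - 2*((starRingEnd ℂ) (A k 0) * A k 3 * E 3 0).im
      ≤ 1 / Real.sqrt 3 * (‖(A k 0)‖ ^2 + ‖(A k 1)‖ ^2
          + ‖(A k 2)‖ ^2 + ‖(A k 3)‖ ^2) :=
    fun k => pointwise _ _ _ _ _ _ _ habs habs2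
  have conjsq : ∀ z : ℂ, ((starRingEnd ℂ) z * z).re = ‖z‖ ^ 2 := by
    intro z; rw [← Complex.normSq_eq_conj_mul_self]; simp [Complex.sq_norm]
  have htr0 : (ρ 0 0 + ρ 1 1 + ρ 2 2 + ρ 3 3).re = 1 := by
    have h : ρ 0 0 + ρ 1 1 + ρ 2 2 + ρ 3 3 = 1 := by
      have h' := hTr
      rw [Matrix.trace, Fin.sum_univ_four] at h'
      simpa [Matrix.diag] using h'
    rw [h]
    simp
  rw [hent 0 0, hent 1 1, hent 2 2, hent 3 3] at htr0
  simp only [Complex.add_re, conjsq] at htr0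
  have h16 : (‖(A 0 0)‖ ^2 + ‖(A 0 1)‖ ^2
          + ‖(A 0 2)‖ ^2 + ‖(A 0 3)‖ ^2)
      + (‖(A 1 0)‖ ^2 + ‖(A 1 1)‖ ^2
          + ‖(A 1 2)‖ ^2 + ‖(A 1 3)‖ ^2)
      + (‖(A 2 0)‖ ^2 + ‖(A 2 1)‖ ^2
          + ‖(A 2 2)‖ ^2 + ‖(A 2 3)‖ ^2)
      + (‖(A 3 0)‖ ^2 + ‖(A 3 1)‖ ^2
          + ‖(A 3 2)‖ ^2 + ‖(A 3 3)‖ ^2) = 1 := by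
    linarith [htr0]
  have lhs_eq : c₂ + s₃ =
      (2*((starRingEnd ℂ) (A 0 0) * A 0 2 * E 2 0).re
        + 2*((starRingEnd ℂ) (A 0 1) * A 0 3 * E 3 1).re
        - 2*((starRingEnd ℂ) (A 0 0) * A 0 3 * E 3 0).im)
      + (2*((starRingEnd ℂ) (A 1 0) * A 1 2 * E 2 0).re
        + 2*((starRingEnd ℂ) (A 1 1) * A 1 3 * E 3 1).re
        - 2*((starRingEnd ℂ) (A 1 0) * A 1 3 * E 3 0).im)
      + (2*((starRingEnd ℂ) (A 2 0) * A 2 2 * E 2 0).re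
        + 2*((starRingEnd ℂ) (A 2 1) * A 2 3 * E 3 1).re
        - 2*((starRingEnd ℂ) (A 2 0) * A 2 3 * E 3 0).im)
      + (2*((starRingEnd ℂ) (A 3 0) * A 3 2 * E 2 0).re
        + 2*((starRingEnd ℂ) (A 3 1) * A 3 3 * E 3 1).re
        - 2*((starRingEnd ℂ) (A 3 0) * A 3 3 * E 3 0).im) := by
    rw [hc2, hs3, hent 0 2, hent 1 3, hent 0 3]
    simp only [add_mul, Complex.add_re, Complex.add_im]
    ring
  have big := add_le_add (add_le_add (add_le_add (key 0) (key 1)) (key 2)) (key 3)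
  refine le_trans (le_of_eq lhs_eq) (le_trans big (le_of_eq ?_))
  linear_combination (1 / Real.sqrt 3) * h16
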